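/- Let N be a numerical semigroup (with adjoined absorbing element ∞, regarded as a binoid) with smallest positive element n₁. Then for every integer q larger than every gap of N, #(N/[q]N₊) = q·n₁. -/

import Mathlib

/-!  Basic theory of (commutative) binoids: a commutative monoid together with
an absorbing element `infty`.  We use a bundled structure `BinoidOn X`. -/

structure BinoidOn (X : Type u) where
  add : X → X → X
  zero : X
  infty : X
  add_assoc : ∀ a b c : X, add (add a b) c = add a (add b c)
  add_comm : ∀ a b : X, add a b = add b a
  zero_add : ∀ a : X, add zero a = a
  infty_add : ∀ a : X, add infty a = infty

namespace BinoidOn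

variable {X : Type u} {Y : Type v} (B : BinoidOn X) (C : BinoidOn Y)

/-- `n`-fold multiple `n • a`. -/
def smul (B : BinoidOn X) : ℕ → X → X
  | 0, _ => B.zero
  | n + 1, a => B.add a (smul B n a)

/-- Sum of a list of elements. -/
def listSum (l : List X) : X := l.foldr B.add B.zero

/-- An ideal of a binoid: a nonempty subset `I` with `I + N ⊆ I`. -/
def IsIdeal (I : Set X) : Prop := I.Nonempty ∧ ∀ a ∈ I, ∀ x : X, B.add a x ∈ I

/-- A subbinoid: a submonoid containing `infty`. -/
def IsSubbinoid (M : Set X) : Prop :=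
  B.zero ∈ M ∧ B.infty ∈ M ∧ ∀ a ∈ M, ∀ b ∈ M, B.add a b ∈ M

/-- The set of units. -/
def unitsSet : Set X := {u | ∃ a, B.add u a = B.zero}

/-- `N₊`, the ideal of non-units. -/
def nplus : Set X := (B.unitsSet)ᶜ

/-- The ideal generated by a set. -/
def genIdeal (S : Set X) : Set X := {x | ∃ a ∈ S, ∃ n, x = B.add a n}

/-- The `n`-fold sum `nI = {a₁ + ⋯ + aₙ | aᵢ ∈ I}`. -/
def nSum (n : ℕ) (I : Set X) : Set X :=
  {x | ∃ l : List X, l.length = n ∧ (∀ a ∈ l, a ∈ I) ∧ x = B.listSum l}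

/-- The Frobenius power `[q]I`: the ideal generated by `{q • a | a ∈ I}`. -/
def frob (q : ℕ) (I : Set X) : Set X := B.genIdeal {x | ∃ a ∈ I, x = B.smul q a}

/-- The radical of an ideal. -/
def radical (I : Set X) : Set X := {a | ∃ n : ℕ, 0 < n ∧ B.smul n a ∈ I}

/-- `N₊`-primary ideal. -/
def IsPrimary (I : Set X) : Prop := B.radical I = B.nplus

/-- Finitely generated binoid. -/
def FG : Prop :=
  ∃ G : Finset X, ∀ x : X, x = B.infty ∨ ∃ l : List X, (∀ a ∈ l, a ∈ G) ∧ x = B.listSum l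

/-- Semipositive: a nonzero binoid with finitely many units. -/
def Semipositive : Prop := B.zero ≠ B.infty ∧ B.unitsSet.Finite

/-- Prime ideal. -/
def IsPrime (P : Set X) : Prop :=
  B.IsIdeal P ∧ P ≠ Set.univ ∧ ∀ a b : X, B.add a b ∈ P → a ∈ P ∨ b ∈ P

/-- The (combinatorial) dimension of the binoid is `d`: there is a strictly
increasing chain of prime ideals of length `d`, and no longer one. -/
def HasDim (d : ℕ) : Prop :=
  (∃ c : Fin (d + 1) → Set X, StrictMono c ∧ ∀ i, B.IsPrime (c i)) ∧
    ∀ (k : ℕ) (c : Fin (k + 1) → Set X), StrictMono c → (∀ i, B.IsPrime (c i)) → k ≤ d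

end BinoidOn

/-- The setoid collapsing a subset `A` to a single point (Rees congruence). -/
def collapseSetoid {X : Type u} (A : Set X) : Setoid X where
  r x y := x = y ∨ (x ∈ A ∧ y ∈ A)
  iseqv := ⟨fun _ => Or.inl rfl,
    fun h => h.elim (fun e => Or.inl e.symm) (fun h => Or.inr ⟨h.2, h.1⟩),
    fun h1 h2 => by
      rcases h1 with rfl | h1
      · exact h2
      · rcases h2 with rfl | h2
        · exact Or.inr h1
        · exact Or.inr ⟨h1.1, h2.2⟩⟩

namespace BinoidOn

variable {X : Type u} {Y : Type v} (B : BinoidOn X) (C : BinoidOn Y)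

/-- The underlying set of the Rees quotient `N/I` (we collapse the ideal
generated by `I`; for an ideal `I` this is `I` itself). -/
abbrev ReesQuot (I : Set X) : Type u := Quotient (collapseSetoid (B.genIdeal I))

lemma genIdeal_closed {I : Set X} {a : X} (ha : a ∈ B.genIdeal I) (x : X) :
    B.add a x ∈ B.genIdeal I := by
  obtain ⟨b, hb, n, rfl⟩ := ha
  exact ⟨b, hb, B.add n x, (B.add_assoc b n x)⟩

/-- The Rees quotient binoid `N/I`. -/
def quotB (I : Set X) : BinoidOn (B.ReesQuot I) where
  add := Quotient.map₂ B.add (by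
    rintro a a' (rfl | ⟨ha, ha'⟩) b b' (rfl | ⟨hb, hb'⟩)
    · exact Or.inl rfl
    · exact Or.inr ⟨by rw [B.add_comm]; exact B.genIdeal_closed hb _,
        by rw [B.add_comm]; exact B.genIdeal_closed hb' _⟩
    · exact Or.inr ⟨B.genIdeal_closed ha _, B.genIdeal_closed ha' _⟩
    · exact Or.inr ⟨B.genIdeal_closed ha _, B.genIdeal_closed ha' _⟩)
  zero := Quotient.mk _ B.zero
  infty := Quotient.mk _ B.infty
  add_assoc := by
    rintro ⟨a⟩ ⟨b⟩ ⟨c⟩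
    exact congrArg (Quotient.mk _) (B.add_assoc a b c)
  add_comm := by
    rintro ⟨a⟩ ⟨b⟩
    exact congrArg (Quotient.mk _) (B.add_comm a b)
  zero_add := by
    rintro ⟨a⟩
    exact congrArg (Quotient.mk _) (B.zero_add a)
  infty_add := by
    rintro ⟨a⟩
    exact congrArg (Quotient.mk _) (B.infty_add a)

/-- The underlying set of `N/[q]N₊`. -/
abbrev hkQuot (q : ℕ) : Type u := Quotient (collapseSetoid (B.frob q B.nplus))

/-- The Hilbert–Kunz function `HKF(N,q) = #(N/[q]N₊)`, where `#S = |S| - 1`. -/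
noncomputable def hkf (q : ℕ) : ℕ := Nat.card (B.hkQuot q) - 1

/-- Pairs with an `infty` coordinate. -/
def inftyPairs : Set (X × Y) := {p | p.1 = B.infty ∨ p.2 = C.infty}

/-- Carrier of the smash product `M ∧ N`. -/
abbrev SmashCarrier : Type _ := Quotient (collapseSetoid (B.inftyPairs C))

lemma inftyPairs_add_left {p q : X × Y} (hp : p ∈ B.inftyPairs C) :
    (B.add p.1 q.1, C.add p.2 q.2) ∈ B.inftyPairs C := by
  rcases hp with h | h
  · exact Or.inl (by rw [h, B.infty_add])
  · exact Or.inr (by rw [h, C.infty_add])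

lemma inftyPairs_add_right {p q : X × Y} (hq : q ∈ B.inftyPairs C) :
    (B.add p.1 q.1, C.add p.2 q.2) ∈ B.inftyPairs C := by
  rcases hq with h | h
  · exact Or.inl (by rw [h, B.add_comm, B.infty_add])
  · exact Or.inr (by rw [h, C.add_comm, C.infty_add])

/-- The smash product binoid `M ∧ N`. -/
def smash : BinoidOn (B.SmashCarrier C) where
  add := Quotient.map₂ (fun p q => (B.add p.1 q.1, C.add p.2 q.2)) (by
    rintro p p' (rfl | ⟨hp, hp'⟩) q q' (rfl | ⟨hq, hq'⟩)
    · exact Or.inl rfl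
    · exact Or.inr ⟨B.inftyPairs_add_right C hq, B.inftyPairs_add_right C hq'⟩
    · exact Or.inr ⟨B.inftyPairs_add_left C hp, B.inftyPairs_add_left C hp'⟩
    · exact Or.inr ⟨B.inftyPairs_add_left C hp, B.inftyPairs_add_left C hp'⟩)
  zero := Quotient.mk _ (B.zero, C.zero)
  infty := Quotient.mk _ (B.infty, C.infty)
  add_assoc := by
    rintro ⟨a⟩ ⟨b⟩ ⟨c⟩
    exact congrArg (Quotient.mk _)
      (Prod.ext (B.add_assoc _ _ _) (C.add_assoc _ _ _))
  add_comm := by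
    rintro ⟨a⟩ ⟨b⟩
    exact congrArg (Quotient.mk _)
      (Prod.ext (B.add_comm _ _) (C.add_comm _ _))
  zero_add := by
    rintro ⟨a⟩
    exact congrArg (Quotient.mk _)
      (Prod.ext (B.zero_add _) (C.zero_add _))
  infty_add := by
    rintro ⟨a⟩
    exact congrArg (Quotient.mk _)
      (Prod.ext (B.infty_add _) (C.infty_add _))

end BinoidOn

/-- An `N`-set: a pointed set with an operation of the binoid. -/
structure NSetOn {X : Type u} (B : BinoidOn X) (S : Type w) where
  pt : S
  act : X → S → S
  act_zero : ∀ s, act B.zero s = s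
  act_infty : ∀ s, act B.infty s = pt
  act_pt : ∀ n, act n pt = pt
  act_add : ∀ n m s, act (B.add n m) s = act n (act m s)

section NSet

variable {X : Type u} {S : Type w} {B : BinoidOn X}

/-- One step of the connectedness relation on `S ∖ {p}`. -/
def NStep (σ : NSetOn B S) (s t : S) : Prop :=
  s ≠ σ.pt ∧ t ≠ σ.pt ∧ ∃ n, n ≠ B.infty ∧ (σ.act n s = t ∨ σ.act n t = s)

/-- The connectedness (equivalence) relation `∼_N` on `S ∖ {p}`. -/
def NConn (σ : NSetOn B S) : S → S → Prop := Relation.ReflTransGen (NStep σ)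

/-- `N`-subsets of an `N`-set. -/
def IsNSubset (σ : NSetOn B S) (T : Set S) : Prop :=
  σ.pt ∈ T ∧ ∀ n : X, ∀ s ∈ T, σ.act n s ∈ T

/-- `T` is a pointed union of two nontrivial `N`-subsets. -/
def IsReducibleSet (σ : NSetOn B S) (T : Set S) : Prop :=
  ∃ A A' : Set S, IsNSubset σ A ∧ IsNSubset σ A' ∧
    A ≠ {σ.pt} ∧ A' ≠ {σ.pt} ∧ A ∪ A' = T ∧ A ∩ A' = {σ.pt}

/-- An irreducible `N`-subset. -/
def IsIrreducibleSet (σ : NSetOn B S) (T : Set S) : Prop :=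
  IsNSubset σ T ∧ T ≠ {σ.pt} ∧ ¬ IsReducibleSet σ T

end NSet

/-- The trivial binoid `{0, ∞}`, realized on `Bool` (`false = 0`, `true = ∞`). -/
def trivB : BinoidOn Bool where
  add := or
  zero := false
  infty := true
  add_assoc := by decide
  add_comm := by decide
  zero_add := by decide
  infty_add := by decide

/-- The binoid `M^∞` obtained from a commutative monoid by adjoining `∞ = ⊤`. -/
def withTopBinoid (M : Type u) [AddCommMonoid M] : BinoidOn (WithTop M) where
  add := (· + ·)
  zero := 0
  infty := ⊤
  add_assoc := add_assoc
  add_comm := add_comm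
  zero_add := zero_add
  infty_add := fun a => WithTop.top_add a


/-! ### Auxiliary material for Statement 17 -/

section Stmt17Aux

open BinoidOn

/-- Counting lemma: if the complement of `A` is enumerated bijectively by
`f` on `[0, n)` and `A` is nonempty, then the collapse quotient has `n + 1`
elements. -/
lemma card_collapse {X : Type u} (A : Set X) (n : ℕ) (f : ℕ → X)
    (hf : ∀ i, i < n → f i ∉ A)
    (hinj : ∀ i, i < n → ∀ j, j < n → f i = f j → i = j)
    (hsurj : ∀ x, x ∉ A → ∃ i, i < n ∧ f i = x)
    (hA : A.Nonempty) :
    Nat.card (Quotient (collapseSetoid A)) = n + 1 := by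
  obtain ⟨a₀, ha₀⟩ := hA
  set g : Fin (n + 1) → Quotient (collapseSetoid A) := fun i =>
    if h : (i : ℕ) < n then Quotient.mk _ (f i) else Quotient.mk _ a₀ with hg
  have hrel : ∀ x y : X, Quotient.mk (collapseSetoid A) x = Quotient.mk _ y →
      x = y ∨ (x ∈ A ∧ y ∈ A) := fun x y h => Quotient.exact h
  have hbij : Function.Bijective g := by
    constructor
    · intro i j hij
      by_cases hi : (i : ℕ) < n <;> by_cases hj : (j : ℕ) < n
      · rw [hg] at hij
        simp only [dif_pos hi, dif_pos hj] at hij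
        rcases hrel _ _ hij with h | ⟨h1, _⟩
        · exact Fin.ext (hinj _ hi _ hj h)
        · exact absurd h1 (hf _ hi)
      · rw [hg] at hij
        simp only [dif_pos hi, dif_neg hj] at hij
        rcases hrel _ _ hij with h | ⟨h1, _⟩
        · exact absurd (h ▸ ha₀) (hf _ hi)
        · exact absurd h1 (hf _ hi)
      · rw [hg] at hij
        simp only [dif_neg hi, dif_pos hj] at hij
        rcases hrel _ _ hij with h | ⟨_, h2⟩
        · exact absurd (h ▸ ha₀) (hf _ hj)
        · exact absurd h2 (hf _ hj)
      · have : (i : ℕ) = n := Nat.le_antisymm (Nat.lt_succ_iff.mp i.2) (Nat.le_of_not_lt hi)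
        have hjn : (j : ℕ) = n := Nat.le_antisymm (Nat.lt_succ_iff.mp j.2) (Nat.le_of_not_lt hj)
        exact Fin.ext (this.trans hjn.symm)
    · intro x
      refine Quotient.inductionOn x ?_
      intro y
      by_cases hy : y ∈ A
      · refine ⟨⟨n, Nat.lt_succ_self n⟩, ?_⟩
        rw [hg]
        simp only [dif_neg (lt_irrefl n)]
        exact Quotient.sound (Or.inr ⟨ha₀, hy⟩)
      · obtain ⟨i, hi, hfi⟩ := hsurj y hy
        refine ⟨⟨i, Nat.lt_succ_of_lt hi⟩, ?_⟩
        rw [hg]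
        simp only [dif_pos hi]
        exact congrArg _ hfi
  calc Nat.card (Quotient (collapseSetoid A))
      = Nat.card (Fin (n + 1)) := Nat.card_congr (Equiv.ofBijective g hbij).symm
    _ = n + 1 := by simp

end Stmt17Aux

section Stmt17Aux2

variable (S : AddSubmonoid ℕ)

lemma coe_nsmul_val (q : ℕ) (s : ↥S) : ((q • s : ↥S) : ℕ) = q * (s : ℕ) := by
  induction q with
  | zero => simp
  | succ k ih =>
    rw [succ_nsmul]
    push_cast [ih]
    ring

lemma wtb_smul_top {q : ℕ} (hq : q ≠ 0) :
    (withTopBinoid ↥S).smul q ⊤ = ⊤ := by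
  cases q with
  | zero => exact absurd rfl hq
  | succ k =>
    show (⊤ : WithTop ↥S) + _ = ⊤
    exact WithTop.top_add _

lemma wtb_smul_coe (q : ℕ) (s : ↥S) :
    (withTopBinoid ↥S).smul q (↑s) = ((q • s : ↥S) : WithTop ↥S) := by
  induction q with
  | zero =>
    show (0 : WithTop ↥S) = _
    rw [zero_smul]
    rfl
  | succ k ih =>
    show (↑s : WithTop ↥S) + _ = _
    rw [ih, ← WithTop.coe_add, succ_nsmul, add_comm]

lemma wtb_units : (withTopBinoid ↥S).unitsSet = {(0 : WithTop ↥S)} := by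
  ext u
  constructor
  · rintro ⟨a, ha⟩
    cases u with
    | top =>
      exfalso
      change (⊤ : WithTop ↥S) + a = (0 : WithTop ↥S) at ha
      rw [WithTop.top_add] at ha
      exact WithTop.top_ne_zero ha
    | coe s =>
      cases a with
      | top =>
        exfalso
        change (↑s : WithTop ↥S) + ⊤ = (0 : WithTop ↥S) at ha
        rw [WithTop.add_top] at ha
        exact WithTop.top_ne_zero ha
      | coe t =>
        change (↑s : WithTop ↥S) + ↑t = (0 : WithTop ↥S) at ha
        rw [← WithTop.coe_add, ← WithTop.coe_zero] at ha
        have h2 : s + t = 0 := WithTop.coe_injective ha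
        have h3 : (s : ℕ) + (t : ℕ) = 0 := congrArg Subtype.val h2
        have : (s : ℕ) = 0 := by omega
        have : s = 0 := Subtype.ext this
        simp [this]
  · rintro rfl
    exact ⟨0, add_zero 0⟩

lemma wtb_nplus_iff (a : WithTop ↥S) :
    a ∈ (withTopBinoid ↥S).nplus ↔ a ≠ 0 := by
  rw [BinoidOn.nplus, wtb_units]
  simp

theorem stmt17_aux (n₁ : ℕ) (hn₁S : n₁ ∈ S) (hn₁pos : 0 < n₁)
    (hmin : ∀ m ∈ S, 0 < m → n₁ ≤ m)
    (q : ℕ) (hq : ∀ m : ℕ, m ∉ S → m < q) (hq1 : 1 ≤ q) :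
    (withTopBinoid (↥S)).hkf q = q * n₁ := by
  classical
  have hbig : ∀ m : ℕ, q ≤ m → m ∈ S := by
    intro m hm
    by_contra hmS
    exact absurd (hq m hmS) (Nat.not_lt.mpr hm)
  have hqn₁ : q ≤ q * n₁ := Nat.le_mul_of_pos_right q hn₁pos
  set B := withTopBinoid (↥S) with hB
  set Fs : Set (WithTop ↥S) :=
    {x | ∀ s : ↥S, x = ↑s → q * n₁ ≤ (s : ℕ) ∧ ((s : ℕ) - q * n₁) ∈ S} with hFs
  have hFeq : B.frob q B.nplus = Fs := by
    ext x
    constructor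
    · rintro ⟨y, ⟨a, ha, rfl⟩, n, rfl⟩
      have ha' : a ≠ 0 := (wtb_nplus_iff S a).mp ha
      cases a with
      | top =>
        intro s hs
        exfalso
        rw [wtb_smul_top S (by omega)] at hs
        have : (⊤ : WithTop ↥S) + n = ⊤ := WithTop.top_add n
        rw [show B.add = (· + ·) from rfl] at hs
        simp only [this] at hs
        exact WithTop.coe_ne_top hs.symm
      | coe s' =>
        cases n with
        | top =>
          intro s hs
          exfalso
          rw [show B.add = (· + ·) from rfl, wtb_smul_coe S] at hs
          have : ((q • s' : ↥S) : WithTop ↥S) + ⊤ = ⊤ := WithTop.add_top _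
          simp only [this] at hs
          exact WithTop.coe_ne_top hs.symm
        | coe t =>
          intro s hs
          rw [show B.add = (· + ·) from rfl, wtb_smul_coe S] at hs
          change ((q • s' : ↥S) : WithTop ↥S) + ↑t = ↑s at hs
          rw [← WithTop.coe_add] at hs
          have hvals : (s : ℕ) = q * (s' : ℕ) + (t : ℕ) := by
            have h := congrArg Subtype.val (WithTop.coe_injective hs)
            rw [AddSubmonoid.coe_add, coe_nsmul_val] at h
            omega
          have hs'pos : 0 < (s' : ℕ) := by
            rcases Nat.eq_zero_or_pos (s' : ℕ) with h0 | h
            · exact absurd (by exact_mod_cast Subtype.ext h0) ha'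
            · exact h
          have hn₁s' : n₁ ≤ (s' : ℕ) := hmin _ s'.2 hs'pos
          constructor
          · have : q * n₁ ≤ q * (s' : ℕ) := Nat.mul_le_mul_left q hn₁s'
            omega
          · rcases eq_or_lt_of_le hn₁s' with he | hlt
            · have : (s : ℕ) - q * n₁ = (t : ℕ) := by rw [hvals, ← he]; omega
              rw [this]; exact t.2
            · apply hbig
              have : q * (n₁ + 1) ≤ q * (s' : ℕ) := Nat.mul_le_mul_left q hlt
              rw [hvals]
              have : q * n₁ + q ≤ q * (s' : ℕ) := by
                rw [Nat.mul_add, mul_one] at this; exact this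
              omega
    · intro hx
      cases x with
      | top =>
        refine ⟨B.smul q ⊤, ⟨⊤, (wtb_nplus_iff S ⊤).mpr ?_, rfl⟩, ⊤, ?_⟩
        · exact fun h => WithTop.top_ne_zero h
        · rw [wtb_smul_top S (by omega)]
          exact (WithTop.top_add _).symm
      | coe s =>
        obtain ⟨h1, h2⟩ := hx s rfl
        refine ⟨B.smul q (↑(⟨n₁, hn₁S⟩ : ↥S)),
          ⟨↑(⟨n₁, hn₁S⟩ : ↥S), (wtb_nplus_iff S _).mpr ?_, rfl⟩,
          ↑(⟨(s : ℕ) - q * n₁, h2⟩ : ↥S), ?_⟩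
        · intro h
          have : ((⟨n₁, hn₁S⟩ : ↥S) : ℕ) = 0 := by
            have := WithTop.coe_injective (by exact_mod_cast h :
              ((⟨n₁, hn₁S⟩ : ↥S) : WithTop ↥S) = ((0 : ↥S) : WithTop ↥S))
            exact congrArg Subtype.val this
          simp at this
          omega
        · rw [show B.add = (· + ·) from rfl, wtb_smul_coe S]
          change (↑s : WithTop ↥S) = ((q • (⟨n₁, hn₁S⟩ : ↥S) : ↥S) : WithTop ↥S) + ↑(⟨(s : ℕ) - q * n₁, h2⟩ : ↥S)
          rw [← WithTop.coe_add]
          congr 1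
          apply Subtype.ext
          rw [AddSubmonoid.coe_add, coe_nsmul_val]
          simp
          omega
  have htopFs : (⊤ : WithTop ↥S) ∈ Fs := by
    intro s hs
    exact absurd hs.symm (WithTop.coe_ne_top)
  set f : ℕ → WithTop ↥S := fun i =>
    if h : i ∈ S then ((⟨i, h⟩ : ↥S) : WithTop ↥S)
    else ((⟨i + q * n₁, hbig _ (by omega)⟩ : ↥S) : WithTop ↥S) with hf
  have hmemFs : ∀ s : ↥S, (↑s : WithTop ↥S) ∈ Fs ↔
      (q * n₁ ≤ (s : ℕ) ∧ ((s : ℕ) - q * n₁) ∈ S) := by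
    intro s
    constructor
    · intro h; exact h s rfl
    · intro h s' hs'
      obtain rfl : s = s' := WithTop.coe_injective hs'
      exact h
  have hcard : Nat.card (Quotient (collapseSetoid Fs)) = q * n₁ + 1 := by
    apply card_collapse Fs (q * n₁) f
    · intro i hi hmem
      rw [hf] at hmem
      by_cases hiS : i ∈ S
      · simp only [dif_pos hiS] at hmem
        have := ((hmemFs _).mp hmem).1
        simp only at this
        omega
      · simp only [dif_neg hiS] at hmem
        have := ((hmemFs _).mp hmem).2
        simp only [Nat.add_sub_cancel] at this
        exact hiS this
    · intro i hi j hj hij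
      rw [hf] at hij
      by_cases hiS : i ∈ S <;> by_cases hjS : j ∈ S
      · simp only [dif_pos hiS, dif_pos hjS] at hij
        have := congrArg Subtype.val (WithTop.coe_injective hij)
        simpa using this
      · simp only [dif_pos hiS, dif_neg hjS] at hij
        have := congrArg Subtype.val (WithTop.coe_injective hij)
        simp only at this
        omega
      · simp only [dif_neg hiS, dif_pos hjS] at hij
        have := congrArg Subtype.val (WithTop.coe_injective hij)
        simp only at this
        omega
      · simp only [dif_neg hiS, dif_neg hjS] at hij
        have := congrArg Subtype.val (WithTop.coe_injective hij)
        simp only at this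
        omega
    · intro x hx
      cases x with
      | top => exact absurd htopFs hx
      | coe s =>
        have hns : ¬(q * n₁ ≤ (s : ℕ) ∧ ((s : ℕ) - q * n₁) ∈ S) :=
          fun h => hx ((hmemFs s).mpr h)
        by_cases hle : q * n₁ ≤ (s : ℕ)
        · have hnotS : ((s : ℕ) - q * n₁) ∉ S := fun h => hns ⟨hle, h⟩
          have hlt : (s : ℕ) - q * n₁ < q := hq _ hnotS
          refine ⟨(s : ℕ) - q * n₁, by omega, ?_⟩
          rw [hf]
          simp only [dif_neg hnotS]
          congr 1
          apply Subtype.ext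
          simp only
          omega
        · refine ⟨(s : ℕ), by omega, ?_⟩
          rw [hf]
          simp only [dif_pos s.2]
    · exact ⟨⊤, htopFs⟩
  have : B.hkf q = Nat.card (Quotient (collapseSetoid (B.frob q B.nplus))) - 1 := rfl
  rw [this, hFeq, hcard]
  omega

end Stmt17Aux2

/-- Let `N` be a numerical semigroup (generated by positive
integers with gcd `1`), regarded as a binoid by adjoining `∞`, with smallest
positive element `n₁`.  For every integer `q` larger than every gap of `N`,
`#(N/[q]N₊) = q · n₁`. -/
theorem stmt17 (S : AddSubmonoid ℕ) (A : Finset ℕ) (hApos : ∀ a ∈ A, 0 < a)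
    (hgcd : A.gcd id = 1) (hgen : S = AddSubmonoid.closure (A : Set ℕ))
    (n₁ : ℕ) (hn₁ : n₁ = sInf {m : ℕ | m ∈ S ∧ 0 < m})
    (q : ℕ) (hq : ∀ m : ℕ, m ∉ S → m < q) :
    (withTopBinoid (↥S)).hkf q = q * n₁ := by
  classical
  have hAne : A.Nonempty := by
    rcases A.eq_empty_or_nonempty with rfl | h
    · simp at hgcd
    · exact h
  obtain ⟨a, haA⟩ := hAne
  have haS : a ∈ S := by
    rw [hgen]
    exact AddSubmonoid.subset_closure (by exact_mod_cast haA)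
  have hT : {m : ℕ | m ∈ S ∧ 0 < m}.Nonempty := ⟨a, haS, hApos a haA⟩
  have hn₁mem : n₁ ∈ S ∧ 0 < n₁ := by rw [hn₁]; exact Nat.sInf_mem hT
  have hmin : ∀ m ∈ S, 0 < m → n₁ ≤ m := by
    intro m hm hpos
    rw [hn₁]
    exact Nat.sInf_le ⟨hm, hpos⟩
  rcases Nat.eq_zero_or_pos q with rfl | hq1
  · -- `q = 0`: the Frobenius power is everything, so the quotient is a point.
    set B := withTopBinoid (↥S) with hB
    have htopn : (⊤ : WithTop ↥S) ∈ B.nplus :=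
      (wtb_nplus_iff S ⊤).mpr (fun h => WithTop.top_ne_zero h)
    have huniv : ∀ x : WithTop ↥S, x ∈ B.frob 0 B.nplus := by
      intro x
      exact ⟨B.smul 0 ⊤, ⟨⊤, htopn, rfl⟩, x, (B.zero_add x).symm⟩
    haveI hsub : Subsingleton (B.hkQuot 0) := by
      constructor
      intro x y
      refine Quotient.inductionOn₂ x y ?_
      intro u v
      exact Quotient.sound (Or.inr ⟨huniv u, huniv v⟩)
    have hcard : Nat.card (B.hkQuot 0) = 1 :=
      Nat.card_of_subsingleton (Quotient.mk _ ⊤)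
    show Nat.card (B.hkQuot 0) - 1 = 0 * n₁
    rw [hcard]
    simp
  · exact stmt17_aux S n₁ hn₁mem.1 hn₁mem.2 hmin q hq hq1
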